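/- Let A be a complete filtered associative algebra and P: A → A a linear filtration-preserving map, P̃ = id − P. There exists a unique map χ: A_1 → A_1 such that (χ − id)(A_i) ⊆ A_{2i} for all i ≥ 1 and such that for all a ∈ A_1, a = C(P(χ(a)), P̃(χ(a))), where C(x,y) = log(exp(x)exp(y)). -/

import Mathlib

open scoped BigOperators

noncomputable def expS (K : Type*) {A : Type*} [Field K] [CharZero K] [Ring A] [Algebra K A]
    [UniformSpace A] (a : A) : A :=
  ∑' n : ℕ, ((n.factorial : K)⁻¹) • a ^ n

noncomputable def logS (K : Type*) {A : Type*} [Field K] [CharZero K] [Ring A] [Algebra K A]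
    [UniformSpace A] (a : A) : A :=
  ∑' n : ℕ, (((-1 : K) ^ n) * ((n : K) + 1)⁻¹) • (a - 1) ^ (n + 1)

noncomputable def BCHs (K : Type*) {A : Type*} [Field K] [CharZero K] [Ring A] [Algebra K A]
    [UniformSpace A] (x y : A) : A :=
  logS K (expS K x * expS K y) - x - y

/-- A complete decreasing multiplicative filtration defining the topology of `A`. -/
def IsCompleteFiltration (K : Type*) {A : Type*} [Field K] [CharZero K] [Ring A] [Algebra K A]
    [UniformSpace A] (F : ℕ → Submodule K A) : Prop :=
  F 0 = ⊤ ∧ (∀ n, F (n + 1) ≤ F n) ∧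
    (∀ m n : ℕ, ∀ x ∈ F m, ∀ y ∈ F n, x * y ∈ F (m + n)) ∧
    (∀ n, IsOpen ((F n : Set A))) ∧
    (∀ U ∈ nhds (0 : A), ∃ n, ((F n : Set A)) ⊆ U)

/-- remainder of the exponential series after the terms `1 + x`. -/
noncomputable def RE (K : Type*) {A : Type*} [Field K] [CharZero K] [Ring A] [Algebra K A]
    [UniformSpace A] (x : A) : A :=
  ∑' n : ℕ, (((n + 2).factorial : K)⁻¹) • x ^ (n + 2)

/-- remainder of the logarithm series after the term `u`. -/
noncomputable def RL (K : Type*) {A : Type*} [Field K] [CharZero K] [Ring A] [Algebra K A]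
    [UniformSpace A] (u : A) : A :=
  ∑' n : ℕ, (((-1 : K) ^ (n + 1)) * (((n + 1 : ℕ) : K) + 1)⁻¹) • u ^ (n + 1 + 1)

/-- the map `b ↦ log (exp (P b) * exp (b - P b))`. -/
noncomputable def Gmap (K : Type*) {A : Type*} [Field K] [CharZero K] [Ring A] [Algebra K A]
    [UniformSpace A] (P : A →ₗ[K] A) (b : A) : A :=
  logS K (expS K (P b) * expS K (b - P b))

/-- the Newton-type iteration producing `χ`. -/
noncomputable def chiSeq {A : Type*} [Ring A] (G : A → A) (a : A) : ℕ → A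
  | 0 => a
  | (k + 1) => chiSeq G a k - (G (chiSeq G a k) - a)

variable {K : Type*} [Field K] [CharZero K] {A : Type*} [Ring A] [Algebra K A]
  [UniformSpace A] [CompleteSpace A] [T2Space A] [IsTopologicalRing A]
  [IsUniformAddGroup A]

section Helpers

variable {F : ℕ → Submodule K A}

lemma F_anti (hF : IsCompleteFiltration K F) : ∀ {m n : ℕ}, m ≤ n → F n ≤ F m := by
  intro m n h
  induction n, h using Nat.le_induction with
  | base => exact le_rfl
  | succ n hmn ih => exact (hF.2.1 n).trans ih

lemma F_mem_mono (hF : IsCompleteFiltration K F) {m n : ℕ} (h : m ≤ n) {x : A}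
    (hx : x ∈ F n) : x ∈ F m := F_anti hF h hx

lemma zero_of_mem_all (hF : IsCompleteFiltration K F) {x : A} (h : ∀ m, x ∈ F m) : x = 0 := by
  have hx : x ∈ closure ({0} : Set A) := by
    rw [mem_closure_iff_nhds]
    intro U hU
    refine ⟨0, ?_, rfl⟩
    have hc : Continuous fun y : A => y + x := continuous_add_right x
    have h2 : Filter.Tendsto (fun y : A => y + x) (nhds 0) (nhds x) := by
      simpa using hc.tendsto 0
    obtain ⟨n, hn⟩ := hF.2.2.2.2 _ (Filter.mem_map.mp (h2 hU))
    have hmem : (-x) ∈ F n := neg_mem (h n)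
    have := hn hmem
    simpa using this
  simpa using hx

lemma summable_of_F (hF : IsCompleteFiltration K F) {f : ℕ → A}
    (hf : ∀ m k : ℕ, m ≤ k → f k ∈ F m) : Summable f := by
  rw [summable_iff_vanishing]
  intro e he
  obtain ⟨n, hn⟩ := hF.2.2.2.2 e he
  refine ⟨Finset.range n, fun t ht => hn ?_⟩
  have hmem : ∀ k ∈ t, f k ∈ F n := by
    intro k hk
    refine hf n k ?_
    by_contra hc
    exact (Finset.disjoint_left.1 ht hk) (Finset.mem_range.2 (by omega))
  exact sum_mem hmem

lemma tsum_mem_F (hF : IsCompleteFiltration K F) {f : ℕ → A} (hs : Summable f) {n : ℕ}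
    (h : ∀ k, f k ∈ F n) : ∑' k, f k ∈ F n := by
  have hcl : IsClosed ((F n : Set A)) := by
    have := AddSubgroup.isClosed_of_isOpen (F n).toAddSubgroup (by simpa using hF.2.2.2.1 n)
    simpa using this
  exact hcl.mem_of_tendsto hs.hasSum
    (Filter.Eventually.of_forall fun s => sum_mem fun i _ => h i)

lemma pow_mem_F (hF : IsCompleteFiltration K F) {x : A} {i : ℕ} (hx : x ∈ F i) :
    ∀ k, x ^ k ∈ F (k * i)
  | 0 => by
      have : (0 : ℕ) * i = 0 := by ring
      rw [this, hF.1, pow_zero]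
      trivial
  | (k + 1) => by
      have h1 := hF.2.2.1 i (k * i) x hx _ (pow_mem_F hF hx k)
      have hidx : i + k * i = (k + 1) * i := by ring
      rw [hidx] at h1
      rw [pow_succ']
      exact h1

lemma term_mem_F (hF : IsCompleteFiltration K F) {x : A} {i : ℕ} (hx : x ∈ F i) (c : K)
    {k m : ℕ} (hm : m ≤ k * i) : c • x ^ k ∈ F m :=
  Submodule.smul_mem _ _ (F_mem_mono hF hm (pow_mem_F hF hx k))

lemma summable_smul_pow (hF : IsCompleteFiltration K F) {x : A} {i : ℕ} (hi : 1 ≤ i)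
    (hx : x ∈ F i) (c : ℕ → K) (d : ℕ) :
    Summable fun k : ℕ => c k • x ^ (k + d) :=
  summable_of_F hF fun m k hmk => term_mem_F hF hx (c k)
    (calc m ≤ k + d := by omega
      _ ≤ (k + d) * i := le_mul_of_one_le_right (Nat.zero_le _) hi)

lemma pow_sub_pow_mem (hF : IsCompleteFiltration K F) {x x' : A} {i n : ℕ}
    (hx : x ∈ F i) (hx' : x' ∈ F i) (hd : x' - x ∈ F n) :
    ∀ k, x' ^ (k + 1) - x ^ (k + 1) ∈ F (n + k * i)
  | 0 => by simpa using hd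
  | (k + 1) => by
      have h1 := hF.2.2.1 i (n + k * i) x' hx' _ (pow_sub_pow_mem hF hx hx' hd k)
      have h2 := hF.2.2.1 n ((k + 1) * i) _ hd _ (pow_mem_F hF hx (k + 1))
      have hidx : i + (n + k * i) = n + (k + 1) * i := by ring
      rw [hidx] at h1
      have key : x' ^ (k + 1 + 1) - x ^ (k + 1 + 1)
          = x' * (x' ^ (k + 1) - x ^ (k + 1)) + (x' - x) * x ^ (k + 1) := by
        rw [pow_succ' x' (k + 1), pow_succ' x (k + 1), mul_sub, sub_mul]
        abel
      rw [key]
      exact add_mem h1 h2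

/-! ### exponential series -/

lemma summable_expSeries (hF : IsCompleteFiltration K F) {x : A} {i : ℕ} (hi : 1 ≤ i)
    (hx : x ∈ F i) : Summable (fun n : ℕ => ((n.factorial : K)⁻¹) • x ^ n) := by
  simpa using summable_smul_pow hF hi hx (fun n => ((n.factorial : K)⁻¹)) 0

lemma summable_RESeries (hF : IsCompleteFiltration K F) {x : A} {i : ℕ} (hi : 1 ≤ i)
    (hx : x ∈ F i) : Summable (fun n : ℕ => (((n + 2).factorial : K)⁻¹) • x ^ (n + 2)) :=
  summable_smul_pow hF hi hx (fun n => (((n + 2).factorial : K)⁻¹)) 2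

lemma expS_eq (hF : IsCompleteFiltration K F) {x : A} {i : ℕ} (hi : 1 ≤ i) (hx : x ∈ F i) :
    expS K x = 1 + x + RE K x := by
  have hs := summable_expSeries hF hi hx
  have h := Summable.sum_add_tsum_nat_add (f := fun n : ℕ => ((n.factorial : K)⁻¹) • x ^ n) 2 hs
  rw [expS, ← h, RE]
  norm_num [Finset.sum_range_succ, Nat.factorial]

lemma RE_mem (hF : IsCompleteFiltration K F) {x : A} {i : ℕ} (hi : 1 ≤ i) (hx : x ∈ F i) :
    RE K x ∈ F (2 * i) := by
  refine tsum_mem_F hF (summable_RESeries hF hi hx) fun k => ?_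
  refine term_mem_F hF hx _ ?_
  calc 2 * i ≤ (k + 2) * i := Nat.mul_le_mul (by omega) le_rfl
    _ = (k + 2) * i := rfl

lemma RE_sub_mem (hF : IsCompleteFiltration K F) {x x' : A} {i n : ℕ} (hi : 1 ≤ i)
    (hx : x ∈ F i) (hx' : x' ∈ F i) (hd : x' - x ∈ F n) :
    RE K x' - RE K x ∈ F (n + i) := by
  have hs' := summable_RESeries hF hi hx'
  have hs := summable_RESeries hF hi hx
  rw [RE, RE, ← Summable.tsum_sub hs' hs]
  refine tsum_mem_F hF (hs'.sub hs) fun k => ?_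
  have hterm : (((k + 2).factorial : K)⁻¹) • x' ^ (k + 2) - (((k + 2).factorial : K)⁻¹) • x ^ (k + 2)
      = (((k + 2).factorial : K)⁻¹) • (x' ^ (k + 2) - x ^ (k + 2)) := (smul_sub _ _ _).symm
  rw [hterm]
  refine Submodule.smul_mem _ _ (F_mem_mono hF ?_ (pow_sub_pow_mem hF hx hx' hd (k + 1)))
  have : i ≤ (k + 1) * i := le_mul_of_one_le_left (Nat.zero_le _) (by omega)
  omega

/-! ### logarithm series -/

lemma summable_logSeries (hF : IsCompleteFiltration K F) {u : A} {i : ℕ} (hi : 1 ≤ i)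
    (hu : u ∈ F i) :
    Summable (fun n : ℕ => (((-1 : K) ^ n) * ((n : K) + 1)⁻¹) • u ^ (n + 1)) :=
  summable_smul_pow hF hi hu (fun n => ((-1 : K) ^ n) * ((n : K) + 1)⁻¹) 1

lemma summable_RLSeries (hF : IsCompleteFiltration K F) {u : A} {i : ℕ} (hi : 1 ≤ i)
    (hu : u ∈ F i) :
    Summable (fun n : ℕ => (((-1 : K) ^ (n + 1)) * (((n + 1 : ℕ) : K) + 1)⁻¹) • u ^ (n + 1 + 1)) :=
  summable_smul_pow hF hi hu (fun n => ((-1 : K) ^ (n + 1)) * (((n + 1 : ℕ) : K) + 1)⁻¹) 2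

lemma logS_one_add (hF : IsCompleteFiltration K F) {u : A} {i : ℕ} (hi : 1 ≤ i) (hu : u ∈ F i) :
    logS K (1 + u) = u + RL K u := by
  have hs := summable_logSeries hF hi hu
  have h := Summable.sum_add_tsum_nat_add
    (f := fun n : ℕ => (((-1 : K) ^ n) * ((n : K) + 1)⁻¹) • u ^ (n + 1)) 1 hs
  rw [logS]
  simp only [add_sub_cancel_left]
  rw [← h, RL]
  norm_num

lemma RL_mem (hF : IsCompleteFiltration K F) {u : A} {i : ℕ} (hi : 1 ≤ i) (hu : u ∈ F i) :
    RL K u ∈ F (2 * i) := by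
  refine tsum_mem_F hF (summable_RLSeries hF hi hu) fun k => ?_
  refine term_mem_F hF hu _ ?_
  calc 2 * i ≤ (k + 1 + 1) * i := Nat.mul_le_mul (by omega) le_rfl
    _ = (k + 1 + 1) * i := rfl

lemma RL_sub_mem (hF : IsCompleteFiltration K F) {u u' : A} {i n : ℕ} (hi : 1 ≤ i)
    (hu : u ∈ F i) (hu' : u' ∈ F i) (hd : u' - u ∈ F n) :
    RL K u' - RL K u ∈ F (n + i) := by
  have hs' := summable_RLSeries hF hi hu'
  have hs := summable_RLSeries hF hi hu
  rw [RL, RL, ← Summable.tsum_sub hs' hs]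
  refine tsum_mem_F hF (hs'.sub hs) fun k => ?_
  have hterm : (((-1 : K) ^ (k + 1)) * (((k + 1 : ℕ) : K) + 1)⁻¹) • u' ^ (k + 1 + 1)
        - (((-1 : K) ^ (k + 1)) * (((k + 1 : ℕ) : K) + 1)⁻¹) • u ^ (k + 1 + 1)
      = (((-1 : K) ^ (k + 1)) * (((k + 1 : ℕ) : K) + 1)⁻¹) • (u' ^ (k + 1 + 1) - u ^ (k + 1 + 1)) :=
    (smul_sub _ _ _).symm
  rw [hterm]
  refine Submodule.smul_mem _ _ (F_mem_mono hF ?_ (pow_sub_pow_mem hF hu hu' hd (k + 1)))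
  have : i ≤ (k + 1) * i := le_mul_of_one_le_left (Nat.zero_le _) (by omega)
  omega

/-! ### product of exponentials -/

/-- the second-order part of `exp x * exp y`. -/
noncomputable def Wterm (K : Type*) {A : Type*} [Field K] [CharZero K] [Ring A] [Algebra K A]
    [UniformSpace A] (x y : A) : A :=
  x * y + x * RE K y + RE K x + RE K x * y + RE K x * RE K y + RE K y

lemma expS_mul_expS (hF : IsCompleteFiltration K F) {x y : A} {i : ℕ} (hi : 1 ≤ i)
    (hx : x ∈ F i) (hy : y ∈ F i) :
    expS K x * expS K y = 1 + (x + y + Wterm K x y) := by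
  rw [expS_eq hF hi hx, expS_eq hF hi hy, Wterm]
  noncomm_ring

lemma Wterm_mem (hF : IsCompleteFiltration K F) {x y : A} {i : ℕ} (hi : 1 ≤ i)
    (hx : x ∈ F i) (hy : y ∈ F i) : Wterm K x y ∈ F (2 * i) := by
  have hRx := RE_mem hF hi hx
  have hRy := RE_mem hF hi hy
  have h1 : x * y ∈ F (2 * i) := by
    have := hF.2.2.1 i i x hx y hy
    have hidx : i + i = 2 * i := by ring
    rwa [hidx] at this
  have h2 : x * RE K y ∈ F (2 * i) :=
    F_mem_mono hF (by omega) (hF.2.2.1 i (2 * i) x hx _ hRy)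
  have h4 : RE K x * y ∈ F (2 * i) :=
    F_mem_mono hF (by omega) (hF.2.2.1 (2 * i) i _ hRx y hy)
  have h5 : RE K x * RE K y ∈ F (2 * i) :=
    F_mem_mono hF (by omega) (hF.2.2.1 (2 * i) (2 * i) _ hRx _ hRy)
  exact add_mem (add_mem (add_mem (add_mem (add_mem h1 h2) hRx) h4) h5) hRy

lemma Wterm_sub_mem (hF : IsCompleteFiltration K F) {x x' y y' : A} {i n : ℕ} (hi : 1 ≤ i)
    (hx : x ∈ F i) (hx' : x' ∈ F i) (hy : y ∈ F i) (hy' : y' ∈ F i)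
    (hdx : x' - x ∈ F n) (hdy : y' - y ∈ F n) :
    Wterm K x' y' - Wterm K x y ∈ F (n + i) := by
  have hRx := RE_mem hF hi hx
  have hRy := RE_mem hF hi hy
  have hRx' := RE_mem hF hi hx'
  have hRy' := RE_mem hF hi hy'
  have hdRx : RE K x' - RE K x ∈ F (n + i) := RE_sub_mem hF hi hx hx' hdx
  have hdRy : RE K y' - RE K y ∈ F (n + i) := RE_sub_mem hF hi hy hy' hdy
  have t1 : x' * y' - x * y ∈ F (n + i) := by
    have e : x' * y' - x * y = (x' - x) * y' + x * (y' - y) := by noncomm_ring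
    rw [e]
    exact add_mem (hF.2.2.1 n i _ hdx _ hy')
      (F_mem_mono hF (by omega) (hF.2.2.1 i n x hx _ hdy))
  have t2 : x' * RE K y' - x * RE K y ∈ F (n + i) := by
    have e : x' * RE K y' - x * RE K y = (x' - x) * RE K y' + x * (RE K y' - RE K y) := by
      noncomm_ring
    rw [e]
    exact add_mem (F_mem_mono hF (by omega) (hF.2.2.1 n (2 * i) _ hdx _ hRy'))
      (F_mem_mono hF (by omega) (hF.2.2.1 i (n + i) x hx _ hdRy))
  have t4 : RE K x' * y' - RE K x * y ∈ F (n + i) := by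
    have e : RE K x' * y' - RE K x * y = (RE K x' - RE K x) * y' + RE K x * (y' - y) := by
      noncomm_ring
    rw [e]
    exact add_mem (F_mem_mono hF (by omega) (hF.2.2.1 (n + i) i _ hdRx _ hy'))
      (F_mem_mono hF (by omega) (hF.2.2.1 (2 * i) n _ hRx _ hdy))
  have t5 : RE K x' * RE K y' - RE K x * RE K y ∈ F (n + i) := by
    have e : RE K x' * RE K y' - RE K x * RE K y
        = (RE K x' - RE K x) * RE K y' + RE K x * (RE K y' - RE K y) := by noncomm_ring
    rw [e]
    exact add_mem (F_mem_mono hF (by omega) (hF.2.2.1 (n + i) (2 * i) _ hdRx _ hRy'))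
      (F_mem_mono hF (by omega) (hF.2.2.1 (2 * i) (n + i) _ hRx _ hdRy))
  have e : Wterm K x' y' - Wterm K x y
      = (x' * y' - x * y) + (x' * RE K y' - x * RE K y) + (RE K x' - RE K x)
        + (RE K x' * y' - RE K x * y) + (RE K x' * RE K y' - RE K x * RE K y)
        + (RE K y' - RE K y) := by
    rw [Wterm, Wterm]; abel
  rw [e]
  exact add_mem (add_mem (add_mem (add_mem (add_mem t1 t2) hdRx) t4) t5) hdRy

/-! ### the map `G` -/

lemma Gmap_decomp (hF : IsCompleteFiltration K F) (P : A →ₗ[K] A)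
    (hP : ∀ n, ∀ x ∈ F n, P x ∈ F n) {b : A} {i : ℕ} (hi : 1 ≤ i) (hb : b ∈ F i) :
    Gmap K P b = (b + Wterm K (P b) (b - P b)) + RL K (b + Wterm K (P b) (b - P b))
      ∧ Wterm K (P b) (b - P b) ∈ F (2 * i) := by
  have hx : P b ∈ F i := hP i b hb
  have hy : b - P b ∈ F i := sub_mem hb hx
  have hw : Wterm K (P b) (b - P b) ∈ F (2 * i) := Wterm_mem hF hi hx hy
  have hprod := expS_mul_expS hF hi hx hy
  have hxy : P b + (b - P b) + Wterm K (P b) (b - P b) = b + Wterm K (P b) (b - P b) := by abel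
  rw [hxy] at hprod
  have hu : b + Wterm K (P b) (b - P b) ∈ F i := add_mem hb (F_mem_mono hF (by omega) hw)
  refine ⟨?_, hw⟩
  rw [Gmap, hprod, logS_one_add hF hi hu]

lemma Gmap_sub_mem (hF : IsCompleteFiltration K F) (P : A →ₗ[K] A)
    (hP : ∀ n, ∀ x ∈ F n, P x ∈ F n) {b : A} {i : ℕ} (hi : 1 ≤ i) (hb : b ∈ F i) :
    Gmap K P b - b ∈ F (2 * i) := by
  obtain ⟨heq, hw⟩ := Gmap_decomp hF P hP hi hb
  have hu : b + Wterm K (P b) (b - P b) ∈ F i := add_mem hb (F_mem_mono hF (by omega) hw)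
  have hRL := RL_mem hF hi hu
  have e : Gmap K P b - b = Wterm K (P b) (b - P b) + RL K (b + Wterm K (P b) (b - P b)) := by
    rw [heq]; abel
  rw [e]
  exact add_mem hw hRL

lemma Gmap_lip (hF : IsCompleteFiltration K F) (P : A →ₗ[K] A)
    (hP : ∀ n, ∀ x ∈ F n, P x ∈ F n) {b b' : A} {i n : ℕ} (hi : 1 ≤ i) (hn : 1 ≤ n)
    (hb : b ∈ F i) (hb' : b' ∈ F i) (hd : b' - b ∈ F n) :
    Gmap K P b' - Gmap K P b - (b' - b) ∈ F (n + i) := by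
  have hx : P b ∈ F i := hP i b hb
  have hy : b - P b ∈ F i := sub_mem hb hx
  have hx' : P b' ∈ F i := hP i b' hb'
  have hy' : b' - P b' ∈ F i := sub_mem hb' hx'
  have hdx : P b' - P b ∈ F n := by rw [← map_sub]; exact hP n _ hd
  have hdy : (b' - P b') - (b - P b) ∈ F n := by
    have e : (b' - P b') - (b - P b) = (b' - b) - (P b' - P b) := by abel
    rw [e]; exact sub_mem hd hdx
  obtain ⟨heq, hw⟩ := Gmap_decomp hF P hP hi hb
  obtain ⟨heq', hw'⟩ := Gmap_decomp hF P hP hi hb'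
  have hdW : Wterm K (P b') (b' - P b') - Wterm K (P b) (b - P b) ∈ F (n + i) :=
    Wterm_sub_mem hF hi hx hx' hy hy' hdx hdy
  have hu : b + Wterm K (P b) (b - P b) ∈ F i := add_mem hb (F_mem_mono hF (by omega) hw)
  have hu' : b' + Wterm K (P b') (b' - P b') ∈ F i := add_mem hb' (F_mem_mono hF (by omega) hw')
  have hdu : (b' + Wterm K (P b') (b' - P b')) - (b + Wterm K (P b) (b - P b)) ∈ F n := by
    have e : (b' + Wterm K (P b') (b' - P b')) - (b + Wterm K (P b) (b - P b))
        = (b' - b) + (Wterm K (P b') (b' - P b') - Wterm K (P b) (b - P b)) := by abel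
    rw [e]
    exact add_mem hd (F_mem_mono hF (by omega) hdW)
  have hdRL : RL K (b' + Wterm K (P b') (b' - P b')) - RL K (b + Wterm K (P b) (b - P b))
      ∈ F (n + i) := RL_sub_mem hF hi hu hu' hdu
  have e : Gmap K P b' - Gmap K P b - (b' - b)
      = (Wterm K (P b') (b' - P b') - Wterm K (P b) (b - P b))
        + (RL K (b' + Wterm K (P b') (b' - P b')) - RL K (b + Wterm K (P b) (b - P b))) := by
    rw [heq, heq']; abel
  rw [e]
  exact add_mem hdW hdRL

end Helpers

theorem stmt1 (F : ℕ → Submodule K A) (hF : IsCompleteFiltration K F)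
    (P : A →ₗ[K] A) (hP : ∀ n, ∀ x ∈ F n, P x ∈ F n) :
    ∃ χ : A → A,
      ((∀ a ∈ F 1, χ a ∈ F 1) ∧
        (∀ i : ℕ, 1 ≤ i → ∀ a ∈ F i, χ a - a ∈ F (2 * i)) ∧
        (∀ a ∈ F 1, a = logS K (expS K (P (χ a)) * expS K (χ a - P (χ a))))) ∧
      ∀ χ' : A → A,
        ((∀ a ∈ F 1, χ' a ∈ F 1) ∧
          (∀ i : ℕ, 1 ≤ i → ∀ a ∈ F i, χ' a - a ∈ F (2 * i)) ∧
          (∀ a ∈ F 1, a = logS K (expS K (P (χ' a)) * expS K (χ' a - P (χ' a))))) →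
        ∀ a ∈ F 1, χ' a = χ a := by
  classical
  -- main estimates on the iteration
  have hmain : ∀ i, 1 ≤ i → ∀ a ∈ F i, ∀ k,
      chiSeq (Gmap K P) a k ∈ F i ∧ chiSeq (Gmap K P) a k - a ∈ F (2 * i) ∧
        Gmap K P (chiSeq (Gmap K P) a k) - a ∈ F (2 * i + k) := by
    intro i hi a ha k
    induction k with
    | zero =>
        refine ⟨ha, by simp [chiSeq], ?_⟩
        simpa [chiSeq] using Gmap_sub_mem hF P hP hi ha
    | succ k ih =>
        obtain ⟨h1, h2, h3⟩ := ih
        have hstep : chiSeq (Gmap K P) a (k + 1)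
            = chiSeq (Gmap K P) a k - (Gmap K P (chiSeq (Gmap K P) a k) - a) := rfl
        have h1' : chiSeq (Gmap K P) a (k + 1) ∈ F i := by
          rw [hstep]; exact sub_mem h1 (F_mem_mono hF (by omega) h3)
        have h2' : chiSeq (Gmap K P) a (k + 1) - a ∈ F (2 * i) := by
          rw [hstep]
          have e : chiSeq (Gmap K P) a k - (Gmap K P (chiSeq (Gmap K P) a k) - a) - a
              = (chiSeq (Gmap K P) a k - a) - (Gmap K P (chiSeq (Gmap K P) a k) - a) := by abel
          rw [e]
          exact sub_mem h2 (F_mem_mono hF (by omega) h3)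
        have hdiff : chiSeq (Gmap K P) a (k + 1) - chiSeq (Gmap K P) a k ∈ F (2 * i + k) := by
          rw [hstep]
          have e : chiSeq (Gmap K P) a k - (Gmap K P (chiSeq (Gmap K P) a k) - a)
              - chiSeq (Gmap K P) a k = -(Gmap K P (chiSeq (Gmap K P) a k) - a) := by abel
          rw [e]
          exact neg_mem h3
        refine ⟨h1', h2', ?_⟩
        have hlip := Gmap_lip hF P hP hi (show 1 ≤ 2 * i + k by omega) h1 h1' hdiff
        have e : Gmap K P (chiSeq (Gmap K P) a (k + 1)) - a
            = Gmap K P (chiSeq (Gmap K P) a (k + 1)) - Gmap K P (chiSeq (Gmap K P) a k)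
              - (chiSeq (Gmap K P) a (k + 1) - chiSeq (Gmap K P) a k) := by
          rw [hstep]; abel
        rw [e]
        exact F_mem_mono hF (by omega) hlip
  -- summability of the corrections
  have hsum : ∀ a ∈ F 1, Summable (fun k => Gmap K P (chiSeq (Gmap K P) a k) - a) := by
    intro a ha
    exact summable_of_F hF fun m k hmk =>
      F_mem_mono hF (by omega) (hmain 1 le_rfl a ha k).2.2
  -- partial sums of the corrections
  have hpartial : ∀ a : A, ∀ m : ℕ, chiSeq (Gmap K P) a m
      = a - ∑ k ∈ Finset.range m, (Gmap K P (chiSeq (Gmap K P) a k) - a) := by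
    intro a m
    induction m with
    | zero => simp [chiSeq]
    | succ m ih =>
        rw [Finset.sum_range_succ,
          show chiSeq (Gmap K P) a (m + 1)
            = chiSeq (Gmap K P) a m - (Gmap K P (chiSeq (Gmap K P) a m) - a) from rfl, ih]
        abel
  -- the limit and its distance to the iterates
  have htail : ∀ a ∈ F 1, ∀ i, 1 ≤ i → a ∈ F i → ∀ m : ℕ,
      (a - ∑' k, (Gmap K P (chiSeq (Gmap K P) a k) - a)) - chiSeq (Gmap K P) a m
        ∈ F (2 * i + m) := by
    intro a ha1 i hi hai m
    have hs := hsum a ha1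
    have hs' : Summable (fun k => Gmap K P (chiSeq (Gmap K P) a (k + m)) - a) :=
      (summable_nat_add_iff m).2 hs
    have hsplit := Summable.sum_add_tsum_nat_add
      (f := fun k => Gmap K P (chiSeq (Gmap K P) a k) - a) m hs
    rw [hpartial a m, ← hsplit]
    have key : (a - (∑ k ∈ Finset.range m, (Gmap K P (chiSeq (Gmap K P) a k) - a)
          + ∑' k, (Gmap K P (chiSeq (Gmap K P) a (k + m)) - a)))
        - (a - ∑ k ∈ Finset.range m, (Gmap K P (chiSeq (Gmap K P) a k) - a))
        = -(∑' k, (Gmap K P (chiSeq (Gmap K P) a (k + m)) - a)) := by abel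
    rw [key]
    refine neg_mem (tsum_mem_F hF hs' fun k => ?_)
    exact F_mem_mono hF (by omega) (hmain i hi a hai (k + m)).2.2
  set χ : A → A := fun a =>
    if a ∈ F 1 then a - ∑' k, (Gmap K P (chiSeq (Gmap K P) a k) - a) else a with hχdef
  have hχeq : ∀ a ∈ F 1, χ a = a - ∑' k, (Gmap K P (chiSeq (Gmap K P) a k) - a) := by
    intro a ha
    simp only [hχdef]
    rw [if_pos ha]
  -- property B
  have propB : ∀ i : ℕ, 1 ≤ i → ∀ a ∈ F i, χ a - a ∈ F (2 * i) := by
    intro i hi a hai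
    have ha1 : a ∈ F 1 := F_mem_mono hF hi hai
    have := htail a ha1 i hi hai 0
    rw [← hχeq a ha1] at this
    simpa [chiSeq] using this
  -- property A
  have propA : ∀ a ∈ F 1, χ a ∈ F 1 := by
    intro a ha
    have h := propB 1 le_rfl a ha
    have e : χ a = a + (χ a - a) := by abel
    rw [e]
    exact add_mem ha (F_mem_mono hF (by omega) h)
  -- property C
  have propC : ∀ a ∈ F 1, a = Gmap K P (χ a) := by
    intro a ha
    have hz : ∀ m : ℕ, Gmap K P (χ a) - a ∈ F m := by
      intro m
      have h1 := (hmain 1 le_rfl a ha m).1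
      have h3 := (hmain 1 le_rfl a ha m).2.2
      have ht : χ a - chiSeq (Gmap K P) a m ∈ F (2 * 1 + m) := by
        rw [hχeq a ha]
        exact htail a ha 1 le_rfl ha m
      have hχF : χ a ∈ F 1 := propA a ha
      have hlip := Gmap_lip hF P hP le_rfl (show 1 ≤ 2 * 1 + m by omega) h1 hχF ht
      have e : Gmap K P (χ a) - a
          = (Gmap K P (χ a) - Gmap K P (chiSeq (Gmap K P) a m)
              - (χ a - chiSeq (Gmap K P) a m))
            + (χ a - chiSeq (Gmap K P) a m)
            + (Gmap K P (chiSeq (Gmap K P) a m) - a) := by abel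
      rw [e]
      exact add_mem (add_mem (F_mem_mono hF (by omega) hlip) (F_mem_mono hF (by omega) ht))
        (F_mem_mono hF (by omega) h3)
    have h0 : Gmap K P (χ a) - a = 0 := zero_of_mem_all hF hz
    exact (sub_eq_zero.mp h0).symm
  refine ⟨χ, ⟨propA, propB, fun a ha => propC a ha⟩, ?_⟩
  -- uniqueness
  rintro χ' ⟨hA', _hB', hC'⟩ a ha
  have hδ : ∀ n : ℕ, χ' a - χ a ∈ F n := by
    intro n
    induction n with
    | zero =>
        rw [hF.1]
        trivial
    | succ n ih =>
        rcases Nat.eq_zero_or_pos n with h0 | hpos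
        · subst h0
          exact sub_mem (hA' a ha) (propA a ha)
        · have hlip := Gmap_lip hF P hP le_rfl hpos (propA a ha) (hA' a ha) ih
          have e1 : Gmap K P (χ' a) = a := (hC' a ha).symm
          have e2 : Gmap K P (χ a) = a := (propC a ha).symm
          rw [e1, e2] at hlip
          have e : a - a - (χ' a - χ a) = -(χ' a - χ a) := by abel
          rw [e] at hlip
          simpa using neg_mem hlip
  have := zero_of_mem_all hF hδ
  exact sub_eq_zero.mp this
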